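/- arXiv:2106.08290 — 4 statements merged into one kernel-verified Lean document; each statement's English description precedes it below -/
import Mathlib

section
/- For integers s ≥ 1 and t ≥ 1, let θ' = t(2s-1). Then the sumset {i + t·j : 0 ≤ i ≤ t-1, 0 ≤ j ≤ s-1} + {t·q + θ'·l : 0 ≤ q ≤ s-1, 0 ≤ l ≤ t-1} equals the interval {0, 1, ..., t·θ' - 1}. -/
/-- The sumset of the PolyDot coded exponent sets equals the full interval
`{0, ..., t·θ' - 1}` with `θ' = t(2s-1)`, for `s, t ≥ 1`. -/
theorem stmt_0 (s t : ℤ) (hs : 1 ≤ s) (ht : 1 ≤ t) :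
    {n : ℤ | ∃ i j q l : ℤ,
        0 ≤ i ∧ i ≤ t - 1 ∧ 0 ≤ j ∧ j ≤ s - 1 ∧
        0 ≤ q ∧ q ≤ s - 1 ∧ 0 ≤ l ∧ l ≤ t - 1 ∧
        n = (i + t * j) + (t * q + (t * (2 * s - 1)) * l)} =
      {n : ℤ | 0 ≤ n ∧ n ≤ t * (t * (2 * s - 1)) - 1} := by
  have ht0 : (0:ℤ) < t := by linarith
  have hθ : (0:ℤ) < t * (2 * s - 1) := by nlinarith
  ext n
  simp only [Set.mem_setOf_eq]
  constructor
  · rintro ⟨i, j, q, l, hi0, hi1, hj0, hj1, hq0, hq1, hl0, hl1, rfl⟩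
    constructor
    · have h1 : 0 ≤ t * j := by positivity
      have h2 : 0 ≤ t * q := by positivity
      have h3 : 0 ≤ t * (2 * s - 1) * l := by positivity
      linarith
    · nlinarith [mul_le_mul_of_nonneg_left hj1 ht0.le,
        mul_le_mul_of_nonneg_left hq1 ht0.le,
        mul_le_mul_of_nonneg_left hl1 hθ.le]
  · rintro ⟨hn0, hn1⟩
    set θ := t * (2 * s - 1) with hθdef
    set l := n / θ with hl
    set r := n % θ with hr
    have hrl : n = θ * l + r := (Int.mul_ediv_add_emod n θ).symm
    have hr0 : 0 ≤ r := Int.emod_nonneg n hθ.ne'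
    have hr1 : r < θ := Int.emod_lt_of_pos n hθ
    have hl0 : 0 ≤ l := Int.ediv_nonneg hn0 hθ.le
    have hl1 : l ≤ t - 1 := by
      by_contra h
      push_neg at h
      have : t ≤ l := by linarith
      nlinarith [mul_le_mul_of_nonneg_left this hθ.le]
    set i := r % t with hi
    set m := r / t with hm
    have hrm : r = t * m + i := (Int.mul_ediv_add_emod r t).symm
    have hi0 : 0 ≤ i := Int.emod_nonneg r ht0.ne'
    have hi1 : i < t := Int.emod_lt_of_pos r ht0
    have hm0 : 0 ≤ m := Int.ediv_nonneg hr0 ht0.le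
    have hm1 : m ≤ 2 * s - 2 := by
      by_contra h
      push_neg at h
      have h2 : 2 * s - 1 ≤ m := by linarith
      nlinarith [mul_le_mul_of_nonneg_left h2 ht0.le]
    rcases le_or_gt m (s - 1) with hms | hms
    · exact ⟨i, m, 0, l, hi0, by linarith, hm0, hms, le_refl 0, by linarith, hl0, hl1,
        by rw [hrl, hrm]; ring⟩
    · exact ⟨i, s - 1, m - (s - 1), l, hi0, by linarith, by linarith, le_refl _,
        by linarith, by linarith, hl0, hl1, by rw [hrl, hrm]; ring⟩
end

section
/- For integers s, t ≥ 2, let θ' = t(2s-1). Define V₁ = {î - w + θ'·l̂ : -t ≤ î ≤ -1, 1 ≤ l̂ ≤ t-1, 0 ≤ w ≤ θ'-ts-1} and, for p with 0 ≤ p ≤ t-1 and z ≥ 1, V₂ = {î - u + θ'·l̃ : -t ≤ î ≤ -1, 1 ≤ l̃ ≤ t-1-p, 0 ≤ u ≤ z-1-p(θ'-ts)} where p = min(⌊(z-1)/(θ'-ts)⌋, t-1) and z > θ'-ts. Then V₂ ⊆ V₁. -/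
/-- `V₂ ⊆ V₁`: one family of forbidden exponent values for `S_B(x)` in PolyDot-CMPC
is contained in the other, where `θ' = t(2s-1)` and
`p = min(⌊(z-1)/(θ'-ts)⌋, t-1)`, assuming `z > θ'-ts`. -/
theorem stmt_3 (s t z : ℤ) (hs : 2 ≤ s) (ht : 2 ≤ t) (hz : 1 ≤ z)
    (hzl : t * (2 * s - 1) - t * s < z) :
    {n : ℤ | ∃ i u l : ℤ,
        -t ≤ i ∧ i ≤ -1 ∧
        1 ≤ l ∧ l ≤ t - 1 - min ((z - 1) / (t * (2 * s - 1) - t * s)) (t - 1) ∧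
        0 ≤ u ∧
        u ≤ z - 1 - (min ((z - 1) / (t * (2 * s - 1) - t * s)) (t - 1)) *
              (t * (2 * s - 1) - t * s) ∧
        n = i - u + (t * (2 * s - 1)) * l} ⊆
      {n : ℤ | ∃ i w l : ℤ,
        -t ≤ i ∧ i ≤ -1 ∧ 1 ≤ l ∧ l ≤ t - 1 ∧
        0 ≤ w ∧ w ≤ t * (2 * s - 1) - t * s - 1 ∧
        n = i - w + (t * (2 * s - 1)) * l} := by
  intro n hn
  obtain ⟨i, u, l, h1, h2, h3, h4, h5, h6, h7⟩ := hn
  set D := t * (2 * s - 1) - t * s with hD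
  have hDpos : 0 < D := by nlinarith
  set q := (z - 1) / D with hq
  have hqnn : 0 ≤ q := Int.ediv_nonneg (by linarith) hDpos.le
  rcases le_or_gt q (t - 1) with h | h
  · have hmin : min q (t - 1) = q := min_eq_left h
    rw [hmin] at h4 h6
    have hmod : z - 1 - D * q = (z - 1) % D := by
      rw [Int.emod_def, hq]
    have hlt : (z - 1) % D < D := Int.emod_lt_of_pos _ hDpos
    refine ⟨i, u, l, h1, h2, h3, by linarith, h5, by nlinarith, h7⟩
  · have hmin : min q (t - 1) = t - 1 := min_eq_right h.le
    rw [hmin] at h4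
    linarith
end

section
/- For integers s, t ≥ 2, let θ' = t(2s-1) and suppose z is an integer with z > ts. Let p = min(⌊(z-1)/(θ'-ts)⌋, t-1). Then the union {0, ..., t·θ' + t + z - 2} ∪ {2ts + (t-1)·θ', ..., (p+2)·ts + θ'·(t-1) + 2z - 2} equals the interval {0, ..., (p+2)·ts + θ'·(t-1) + 2z - 2}. -/
/-- For `s, t ≥ 2`, `z > ts`, `θ' = t(2s-1)` and `p = min(⌊(z-1)/(θ'-ts)⌋, t-1)`,
the union `D₁ ∪ D₂ ∪ D₄` is the full interval `{0, ..., (p+2)ts + θ'(t-1) + 2z - 2}`. -/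
theorem stmt_5 (s t z : ℤ) (hs : 2 ≤ s) (ht : 2 ≤ t) (hz : t * s < z) :
    Set.Icc (0 : ℤ) (t * (t * (2 * s - 1)) + t + z - 2) ∪
      Set.Icc (2 * (t * s) + (t - 1) * (t * (2 * s - 1)))
        ((min ((z - 1) / (t * (2 * s - 1) - t * s)) (t - 1) + 2) * (t * s) +
          (t * (2 * s - 1)) * (t - 1) + 2 * z - 2) =
    Set.Icc (0 : ℤ)
      ((min ((z - 1) / (t * (2 * s - 1) - t * s)) (t - 1) + 2) * (t * s) +
        (t * (2 * s - 1)) * (t - 1) + 2 * z - 2) := by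
  have hd : 0 ≤ (z - 1) / (t * (2 * s - 1) - t * s) :=
    Int.ediv_nonneg (by nlinarith) (by nlinarith)
  set m := min ((z - 1) / (t * (2 * s - 1) - t * s)) (t - 1) with hmdef
  have hm0 : 0 ≤ m := le_min hd (by omega)
  have hts : (0:ℤ) < t * s := by nlinarith
  have hmu : 0 ≤ m * (t * s) := mul_nonneg hm0 hts.le
  have htt : 0 ≤ t * t * (2 * s - 1) := by nlinarith [mul_pos (show (0:ℤ) < t by omega) hts]
  ext x
  simp only [Set.mem_union, Set.mem_Icc]
  constructor
  · rintro (⟨h1, h2⟩ | ⟨h1, h2⟩)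
    · exact ⟨h1, le_trans h2 (by nlinarith [hmu, htt])⟩
    · exact ⟨le_trans (by nlinarith [hmu, htt]) h1, h2⟩
  · rintro ⟨h1, h2⟩
    by_cases h : x ≤ t * (t * (2 * s - 1)) + t + z - 2
    · exact Or.inl ⟨h1, h⟩
    · exact Or.inr ⟨by nlinarith [hmu, htt], h2⟩
end

section
/- For integers t ≥ 2 and z ≥ 1 with z < t and s = 1, we have (t² + 2t + tz - 1) - (2t² + 2z - 1) = (2-t)(t-z), which is negative when t ≥ 3; hence for s = 1, t ≥ 3, z < t, PolyDot-CMPC requires strictly fewer workers than GCSA-NA. -/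
/-- For `t ≥ 2`, `1 ≤ z < t` (and `s = 1`):
`(t² + 2t + tz - 1) - (2t² + 2z - 1) = (2-t)(t-z)`, and if moreover `t ≥ 3`
then PolyDot-CMPC requires strictly fewer workers than GCSA-NA. -/
theorem stmt_16 (t z : ℤ) (ht : 2 ≤ t) (hz : 1 ≤ z) (hzt : z < t) :
    (t ^ 2 + 2 * t + t * z - 1) - (2 * t ^ 2 + 2 * z - 1) = (2 - t) * (t - z) ∧
      (3 ≤ t → t ^ 2 + 2 * t + t * z - 1 < 2 * t ^ 2 + 2 * z - 1) := by
  constructor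
  · ring
  · intro h3
    nlinarith
end
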